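/- Let A be an entrywise nonnegative n×n matrix, α ∈ [0,1], and S_α(A) the weighted geometric symmetrization with entries a_{ij}^α a_{ji}^{1-α}. Then ‖S_α(A)‖ ≤ ‖A‖, where ‖·‖ is the ℓ²→ℓ² operator norm. -/

import Mathlib

/-- The ℓ² → ℓ² operator norm of a real `n × n` matrix. -/
noncomputable def opNorm {n : ℕ} (A : Matrix (Fin n) (Fin n) ℝ) : ℝ :=
  ‖LinearMap.toContinuousLinearMap (Matrix.toEuclideanLin A)‖

/-- The weighted geometric symmetrization `S_α(A)` with entries `a_{ij}^α a_{ji}^{1-α}`. -/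
noncomputable def wgs {n : ℕ} (α : ℝ) (A : Matrix (Fin n) (Fin n) ℝ) :
    Matrix (Fin n) (Fin n) ℝ :=
  Matrix.of fun i j => A i j ^ α * A j i ^ (1 - α)

open Matrix
open scoped Matrix.Norms.L2Operator

/-- Entrywise domination of nonnegative matrices gives operator-norm domination. -/
lemma norm_le_of_entrywise {n : ℕ} (B C : Matrix (Fin n) (Fin n) ℝ)
    (h0 : ∀ i j, 0 ≤ B i j) (h : ∀ i j, B i j ≤ C i j) : ‖B‖ ≤ ‖C‖ := by
  rw [Matrix.l2_opNorm_def]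
  apply ContinuousLinearMap.opNorm_le_bound _ (norm_nonneg C)
  intro x
  set x' : Fin n → ℝ := (WithLp.equiv 2 _) x with hx'
  set y : EuclideanSpace ℝ (Fin n) := (WithLp.equiv 2 _).symm (fun i => |x' i|) with hy
  have hynorm : ‖y‖ = ‖x‖ := by
    simp [hy, EuclideanSpace.norm_eq, sq_abs, hx']
  have hmv : ∀ i, |(B *ᵥ x') i| ≤ (C *ᵥ fun i => |x' i|) i := by
    intro i
    simp only [Matrix.mulVec, dotProduct]
    refine (Finset.abs_sum_le_sum_abs _ _).trans ?_
    apply Finset.sum_le_sum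
    intro j _
    rw [abs_mul, abs_of_nonneg (h0 i j)]
    exact mul_le_mul_of_nonneg_right (h i j) (abs_nonneg _)
  have key : ‖(LinearMap.toContinuousLinearMap (Matrix.toEuclideanLin B)) x‖
      ≤ ‖(EuclideanSpace.equiv (Fin n) ℝ).symm (C *ᵥ fun i => |x' i|)‖ := by
    simp only [LinearMap.coe_toContinuousLinearMap', Matrix.toEuclideanLin_apply]
    rw [EuclideanSpace.norm_eq, EuclideanSpace.norm_eq]
    apply Real.sqrt_le_sqrt
    apply Finset.sum_le_sum
    intro i _
    have h1 := hmv i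
    have h2 : (0:ℝ) ≤ |(B *ᵥ x') i| := abs_nonneg _
    have h3 := sq_abs ((B *ᵥ x') i)
    simp only [Real.norm_eq_abs, EuclideanSpace.equiv, PiLp.continuousLinearEquiv_symm_apply,
      sq_abs, ← hx']
    rw [show x.ofLp = x' from rfl]
    nlinarith [h1, h2, h3]
  refine key.trans ?_
  calc ‖(EuclideanSpace.equiv (Fin n) ℝ).symm (C *ᵥ fun i => |x' i|)‖
      ≤ ‖C‖ * ‖y‖ := Matrix.l2_opNorm_mulVec C y
    _ = ‖C‖ * ‖x‖ := by rw [hynorm]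

/-- For a nonnegative matrix `A` and `α ∈ [0,1]`, `‖S_α(A)‖ ≤ ‖A‖`. -/
theorem opNorm_wgs_le {n : ℕ} (A : Matrix (Fin n) (Fin n) ℝ) (hA : ∀ i j, 0 ≤ A i j)
    (α : ℝ) (hα0 : 0 ≤ α) (hα1 : α ≤ 1) :
    opNorm (wgs α A) ≤ opNorm A := by
  have e : ∀ M : Matrix (Fin n) (Fin n) ℝ, opNorm M = ‖M‖ := fun M => rfl
  rw [e, e]
  have h1α : (0:ℝ) ≤ 1 - α := by linarith
  have hdom : ‖wgs α A‖ ≤ ‖α • A + (1 - α) • Aᵀ‖ := by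
    apply norm_le_of_entrywise
    · intro i j
      exact mul_nonneg (Real.rpow_nonneg (hA i j) _) (Real.rpow_nonneg (hA j i) _)
    · intro i j
      simp only [wgs, Matrix.of_apply, Matrix.add_apply, Matrix.smul_apply,
        Matrix.transpose_apply, smul_eq_mul]
      exact Real.geom_mean_le_arith_mean2_weighted hα0 h1α (hA i j) (hA j i) (by ring)
  refine hdom.trans ?_
  have htr : ‖Aᵀ‖ = ‖A‖ := by
    have : Aᵀ = Aᴴ := by ext i j; simp [Matrix.conjTranspose_apply]
    rw [this, Matrix.l2_opNorm_conjTranspose]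
  calc ‖α • A + (1 - α) • Aᵀ‖ ≤ ‖α • A‖ + ‖(1 - α) • Aᵀ‖ := norm_add_le _ _
    _ = α * ‖A‖ + (1 - α) * ‖A‖ := by
        rw [norm_smul, norm_smul, htr, Real.norm_eq_abs, Real.norm_eq_abs,
          abs_of_nonneg hα0, abs_of_nonneg h1α]
    _ = ‖A‖ := by ring
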